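/- Let s be a positive integer, and let β'_i = ε_i − ε_{s+1−i} ∈ ℝ^s for 1 ≤ i ≤ ⌊(s−1)/2⌋ be the non-simple elements of the Kostant cascade of A_{s-1}. Define coroot evaluations via α^∨ for α = ε_j − ε_{j+1} (so β(α^∨) = (β, ε_j − ε_{j+1}) for the standard inner product). Order the coroots h'_j as h'_{2j-1} = α^∨_{2j-1}, h'_{2j} = α^∨_{s-2j} (for j up to ⌊(s+1)/4⌋ or ⌊s/4⌋, without repetitions, as appropriate to get ⌊(s−1)/2⌋ elements). Then the square matrix A of size ⌊(s−1)/2⌋ with entries A_{ij} = −β'_i(h'_j) is lower triangular with −1 on the diagonal; in particular det A = (−1)^{⌊(s−1)/2⌋}. -/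

import Mathlib

open scoped RealInnerProductSpace

/-- 1-based orthonormal basis vectors `ε_k` of `ℝ^s` (zero out of range). -/
noncomputable def eps (s k : ℕ) : EuclideanSpace ℝ (Fin s) :=
  if h : 1 ≤ k ∧ k ≤ s then EuclideanSpace.single ⟨k - 1, by omega⟩ (1 : ℝ) else 0

/-- The non-simple elements `β'_i = ε_i - ε_{s+1-i}` of the Kostant cascade of
`A_{s-1}`. -/
noncomputable def cascadeRoot (s i : ℕ) : EuclideanSpace ℝ (Fin s) :=
  eps s i - eps s (s + 1 - i)

/-- The ordered coroots `h'_k` : `h'_{2j-1} = α^∨_{2j-1}` and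
`h'_{2j} = α^∨_{s-2j}`, where `α^∨_m = ε_m - ε_{m+1}` (all roots of `A_{s-1}`
have squared length `2`, so pairing against `α^∨_m` is the inner product with
`ε_m - ε_{m+1}`). -/
noncomputable def corootA (s k : ℕ) : EuclideanSpace ℝ (Fin s) :=
  if k % 2 = 1 then eps s k - eps s (k + 1) else eps s (s - k) - eps s (s - k + 1)


lemma inner_eps (s a b : ℕ) :
    ⟪eps s a, eps s b⟫ = if a = b ∧ 1 ≤ a ∧ a ≤ s then 1 else 0 := by
  unfold eps
  by_cases ha : 1 ≤ a ∧ a ≤ s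
  · by_cases hb : 1 ≤ b ∧ b ≤ s
    · rw [dif_pos ha, dif_pos hb, EuclideanSpace.inner_single_left,
        EuclideanSpace.single_apply]
      simp only [map_one, one_mul, Fin.mk.injEq]
      split_ifs <;> first | rfl | omega
    · rw [dif_pos ha, dif_neg hb, inner_zero_right]
      rw [if_neg (by omega)]
  · rw [dif_neg ha, inner_zero_left, if_neg (by tauto)]

lemma entry (s i' j' : ℕ) (h1 : 1 ≤ i') (h2 : i' ≤ (s - 1) / 2)
    (h3 : 1 ≤ j') (h4 : j' ≤ (s - 1) / 2) :
    ⟪cascadeRoot s i', corootA s j'⟫ =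
      (if i' = j' then (1 : ℝ) else 0) - (if i' = j' + 1 then 1 else 0) := by
  unfold cascadeRoot corootA
  by_cases hp : j' % 2 = 1 <;>
    simp only [hp, if_true, if_false, inner_sub_left, inner_sub_right, inner_eps] <;>
    split_ifs <;> (try push_neg at *) <;> first | ring1 | (exfalso; omega)

/-- The matrix `A` of size `⌊(s-1)/2⌋` with entries
`A_{ij} = -β'_i(h'_j)` is lower triangular with `-1` on the diagonal; in
particular `det A = (-1)^{⌊(s-1)/2⌋}`. -/
theorem statement_4 (s : ℕ) (hs : 1 ≤ s)
    (A : Matrix (Fin ((s - 1) / 2)) (Fin ((s - 1) / 2)) ℝ)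
    (hA : ∀ (i j : Fin ((s - 1) / 2)), A i j = -⟪cascadeRoot s ((i : ℕ) + 1), corootA s ((j : ℕ) + 1)⟫) :
    (∀ (i j : Fin ((s - 1) / 2)), (i : ℕ) < (j : ℕ) → A i j = 0) ∧ (∀ i, A i i = -1) ∧
    A.det = (-1 : ℝ) ^ ((s - 1) / 2) := by
  have key : ∀ i j : Fin ((s - 1) / 2),
      A i j = -((if (i : ℕ) = j then (1 : ℝ) else 0) -
        (if (i : ℕ) = (j : ℕ) + 1 then 1 else 0)) := by
    intro i j
    rw [hA i j, entry s ((i : ℕ) + 1) ((j : ℕ) + 1) (by omega) (by omega) (by omega) (by omega)]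
    congr 1
    · split_ifs <;> first | rfl | omega
  have htri : ∀ i j : Fin ((s - 1) / 2), (i : ℕ) < (j : ℕ) → A i j = 0 := by
    intro i j h
    rw [key i j, if_neg (by omega), if_neg (by omega)]; ring
  have hdiag : ∀ i, A i i = -1 := by
    intro i
    rw [key i i, if_pos rfl, if_neg (by omega)]; ring
  refine ⟨htri, hdiag, ?_⟩
  rw [Matrix.det_of_lowerTriangular A (fun i j hij => htri i j hij)]
  simp [hdiag, Finset.prod_const]
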